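/- arXiv:1303.2122 — 4 statements merged into one kernel-verified Lean document; each statement's English description precedes it below -/
import Mathlib

section
/- Let $\sim$ be the congruence on the commutative monoid $(\mathbb{Z}_{\geq 0})^2$ generated by the single relation $(1,1) \sim (2,2)$ (adding relations componentwise, i.e. the smallest monoid congruence containing this pair). Then for all positive integers $m \neq m'$: $(m,0) \not\sim (m',0)$ and $(m,1) \not\sim (m',1)$. -/
/-- The congruence on `ℕ × ℕ` generated by `(1,1) ∼ (2,2)`. -/
def stmt6Con : AddCon (ℕ × ℕ) := addConGen (fun p q => p = (1, 1) ∧ q = (2, 2))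

/-- The difference homomorphism `(a,b) ↦ a - b : ℤ`. -/
def stmt6Phi : ℕ × ℕ →+ ℤ where
  toFun p := (p.1 : ℤ) - p.2
  map_zero' := by simp
  map_add' p q := by simp; ring

lemma stmt6_inv {a b : ℕ × ℕ} (h : stmt6Con a b) :
    (a.1 : ℤ) - a.2 = (b.1 : ℤ) - b.2 := by
  have hle : stmt6Con ≤ AddCon.ker stmt6Phi := by
    apply AddCon.addConGen_le.mpr
    rintro p q ⟨rfl, rfl⟩
    rw [AddCon.ker_rel]; simp [stmt6Phi]
  exact hle h

theorem stmt_6 (m m' : ℕ) (hm : 0 < m) (hm' : 0 < m') (hne : m ≠ m') :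
    ¬ stmt6Con (m, 0) (m', 0) ∧ ¬ stmt6Con (m, 1) (m', 1) := by
  constructor <;> intro h <;> have := stmt6_inv h <;> simp at this <;> omega
end

section
/- Let $\sim$ be the monoid congruence on $(\mathbb{Z}_{\geq 0})^2$ generated by the relation $(1,0) \sim (2,2)$. Then for every positive integer $m$, $(m,m) \sim (m/2, 0)$ if $m$ is even, and $(m,m) \sim ((m+1)/2, 1)$ if $m$ is odd; moreover, for positive integers $m \neq m'$ one has $(m,m) \not\sim (m',m')$. -/
/-- The congruence on `ℕ × ℕ` generated by `(1,0) ∼ (2,2)`. -/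
def stmt7Con : AddCon (ℕ × ℕ) := addConGen (fun p q => p = (1, 0) ∧ q = (2, 2))

private lemma stmt7_base : stmt7Con (1, 0) (2, 2) :=
  AddConGen.Rel.of _ _ ⟨rfl, rfl⟩

private lemma stmt7_step (c d : ℕ) : stmt7Con (c + 1, d) (c + 2, d + 2) := by
  have := stmt7Con.add (stmt7Con.refl (c, d)) stmt7_base
  simpa [Prod.ext_iff] using this

private lemma stmt7_chain (a b j : ℕ) : stmt7Con (a + 1, b) (a + 1 + j, b + 2 * j) := by
  induction j with
  | zero => simpa using stmt7Con.refl (a + 1, b)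
  | succ k ih =>
    refine stmt7Con.trans ih ?_
    have := stmt7_step (a + k) (b + 2 * k)
    have h1 : a + 1 + (k + 1) = a + k + 2 := by omega
    have h2 : b + 2 * (k + 1) = b + 2 * k + 2 := by omega
    rw [h1, h2]
    have h3 : a + 1 + k = a + k + 1 := by omega
    rw [h3]
    exact this

/-- Invariant congruence. -/
private def myCon : AddCon (ℕ × ℕ) where
  r p q := p = q ∨ (1 ≤ p.1 ∧ 1 ≤ q.1 ∧ 2 * p.1 + q.2 = 2 * q.1 + p.2)
  iseqv := by
    constructor
    · exact fun _ => Or.inl rfl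
    · rintro ⟨a, b⟩ ⟨c, d⟩ (⟨rfl, rfl⟩ | ⟨h1, h2, h3⟩)
      · exact Or.inl rfl
      · exact Or.inr ⟨h2, h1, by omega⟩
    · rintro ⟨a, b⟩ ⟨c, d⟩ ⟨e, f⟩ (⟨rfl, rfl⟩ | ⟨h1, h2, h3⟩) (⟨rfl, rfl⟩ | ⟨g1, g2, g3⟩)
      · exact Or.inl rfl
      · exact Or.inr ⟨g1, g2, g3⟩
      · exact Or.inr ⟨h1, h2, h3⟩
      · exact Or.inr ⟨h1, g2, by simp at *; omega⟩
  add' := by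
    rintro ⟨a, b⟩ ⟨c, d⟩ ⟨e, f⟩ ⟨g, h⟩ (⟨rfl, rfl⟩ | ⟨h1, h2, h3⟩) (⟨rfl, rfl⟩ | ⟨g1, g2, g3⟩)
    · exact Or.inl rfl
    · exact Or.inr ⟨by simp; omega, by simp; omega, by simp at *; omega⟩
    · exact Or.inr ⟨by simp; omega, by simp; omega, by simp at *; omega⟩
    · exact Or.inr ⟨by simp; omega, by simp; omega, by simp at *; omega⟩

private lemma stmt7_le : stmt7Con ≤ myCon := by
  apply AddCon.addConGen_le.mpr
  rintro p q ⟨rfl, rfl⟩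
  exact Or.inr ⟨by norm_num, by norm_num, by norm_num⟩

theorem stmt_7 :
    (∀ m : ℕ, 0 < m →
      (Even m → stmt7Con (m, m) (m / 2, 0)) ∧
      (Odd m → stmt7Con (m, m) ((m + 1) / 2, 1))) ∧
    (∀ m m' : ℕ, 0 < m → 0 < m' → m ≠ m' → ¬ stmt7Con (m, m) (m', m')) := by
  constructor
  · intro m hm
    constructor
    · rintro ⟨k, rfl⟩
      have hk : 1 ≤ k := by omega
      have := stmt7_chain (k - 1) 0 k
      have h1 : k - 1 + 1 = k := by omega
      have h2 : (k + k) / 2 = k := by omega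
      have h3 : (0 : ℕ) + 2 * k = k + k := by omega
      rw [h1, h3] at this
      rw [h2]
      exact this.symm
    · rintro ⟨k, rfl⟩
      have := stmt7_chain k 1 k
      have h1 : (2 * k + 1 + 1) / 2 = k + 1 := by omega
      have h2 : k + 1 + k = 2 * k + 1 := by omega
      have h3 : 1 + 2 * k = 2 * k + 1 := by omega
      rw [h2, h3] at this
      rw [h1]
      exact this.symm
  · intro m m' hm hm' hne hcon
    have := stmt7_le hcon
    rcases this with h | ⟨h1, h2, h3⟩
    · exact hne (by simpa [Prod.ext_iff] using h)
    · simp at h3; omega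
end

section
/- Let $n$ be a positive integer, let $A = (a_{ij})$ be an $n \times n$ matrix of non-negative integers, and consider the free commutative monoid $T$ on generators $v_1, \dots, v_n, q_1, \dots, q_n$ with the monoid congruence $\sim$ generated by $v_i \sim q_i + \sum_{j=1}^n a_{ij} v_j$ for each $1 \leq i \leq n$. Then for all positive integers $m \neq m'$, $m(v_1 + \cdots + v_n) \not\sim m'(v_1 + \cdots + v_n)$. -/
/-- The relations `vᵢ ∼ qᵢ + ∑ⱼ aᵢⱼ vⱼ` on the free commutative monoid with
generators `v₁, …, vₙ, q₁, …, qₙ`, encoded as `(Fin n → ℕ) × (Fin n → ℕ)`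
(the `v`-coefficients and the `q`-coefficients). -/
def cohnMonoidRel (n : ℕ) (a : Fin n → Fin n → ℕ) :
    ((Fin n → ℕ) × (Fin n → ℕ)) → ((Fin n → ℕ) × (Fin n → ℕ)) → Prop := fun x y =>
  ∃ i : Fin n, x = (Pi.single i 1, 0) ∧ y = (fun j => a i j, Pi.single i 1)

/-- The separating invariant: `φ(v,q) = ∑ᵢ vᵢ + ∑ᵢ qᵢ (1 - ∑ⱼ aᵢⱼ)`. -/
def cohnPhi (n : ℕ) (a : Fin n → Fin n → ℕ) (x : (Fin n → ℕ) × (Fin n → ℕ)) : ℤ :=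
  (∑ i, (x.1 i : ℤ)) + ∑ i, (x.2 i : ℤ) * (1 - ∑ j, (a i j : ℤ))

lemma cohnPhi_add (n : ℕ) (a : Fin n → Fin n → ℕ) (x y : (Fin n → ℕ) × (Fin n → ℕ)) :
    cohnPhi n a (x + y) = cohnPhi n a x + cohnPhi n a y := by
  simp only [cohnPhi, Prod.fst_add, Prod.snd_add, Pi.add_apply, Nat.cast_add, add_mul,
    Finset.sum_add_distrib]
  ring

lemma cohnPhi_invariant (n : ℕ) (a : Fin n → Fin n → ℕ) (x y : (Fin n → ℕ) × (Fin n → ℕ))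
    (h : addConGen (cohnMonoidRel n a) x y) : cohnPhi n a x = cohnPhi n a y := by
  induction h with
  | of x y h =>
    obtain ⟨i, hx, hy⟩ := h
    subst hx; subst hy
    simp [cohnPhi, Pi.single_apply, Finset.sum_ite_eq', Finset.mul_sum]
  | refl => rfl
  | symm _ ih => exact ih.symm
  | trans _ _ ih1 ih2 => exact ih1.trans ih2
  | add _ _ ih1 ih2 => rw [cohnPhi_add, cohnPhi_add, ih1, ih2]

theorem stmt_11 (n : ℕ) (hn : 0 < n) (a : Fin n → Fin n → ℕ)
    (m m' : ℕ) (hm : 0 < m) (hm' : 0 < m') (hne : m ≠ m') :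
    ¬ addConGen (cohnMonoidRel n a) (fun _ => m, 0) (fun _ => m', 0) := by
  intro h
  have := cohnPhi_invariant n a _ _ h
  simp [cohnPhi] at this
  omega
end

section
/- Let $n$ be a positive integer, $A$ an $n \times n$ non-negative integer matrix, and let $T$ be the free commutative monoid on generators $v_1,\dots,v_n,q_1,\dots,q_n$ with congruence $\sim$ generated by $v_i \sim q_i + \sum_j a_{ij} v_j$. Suppose $s, s' \in T$ both have all $q_i$-coefficients zero, and suppose $\gamma \in T$ is reachable from $s$ by a finite sequence of forward substitutions (each replacing one $v_i$ by $q_i + \sum_j a_{ij} v_j$) and also reachable from $s'$ by such a sequence. Then for each $i$, the number of times the $i$-th substitution is used in the first sequence equals the number used in the second sequence, and the $v_i$-coefficients of $s$ and $s'$ agree for each $i$; in particular $s = s'$. -/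
/-- One forward substitution at index `i`: replace one copy of `vᵢ` by
`qᵢ + ∑ⱼ aᵢⱼ vⱼ`.  Elements of the free commutative monoid on
`v₁,…,vₙ,q₁,…,qₙ` are encoded as pairs `(v-coefficients, q-coefficients)`. -/
def subst (n : ℕ) (a : Fin n → Fin n → ℕ) (i : Fin n)
    (t : (Fin n → ℕ) × (Fin n → ℕ)) : (Fin n → ℕ) × (Fin n → ℕ) :=
  (fun j => t.1 j - (if j = i then 1 else 0) + a i j,
   fun j => t.2 j + (if j = i then 1 else 0))

/-- Apply a finite sequence of forward substitutions. -/
def applySubs (n : ℕ) (a : Fin n → Fin n → ℕ) :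
    List (Fin n) → (Fin n → ℕ) × (Fin n → ℕ) → (Fin n → ℕ) × (Fin n → ℕ)
  | [], t => t
  | i :: L, t => applySubs n a L (subst n a i t)

/-- A sequence of substitutions is valid when at each step the coefficient of
the vertex being substituted is positive. -/
def validSeq (n : ℕ) (a : Fin n → Fin n → ℕ) :
    List (Fin n) → (Fin n → ℕ) × (Fin n → ℕ) → Prop
  | [], _ => True
  | i :: L, t => 0 < t.1 i ∧ validSeq n a L (subst n a i t)



lemma q_coeff (n : ℕ) (a : Fin n → Fin n → ℕ) :
    ∀ (L : List (Fin n)) (t : (Fin n → ℕ) × (Fin n → ℕ)) (j : Fin n),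
      (applySubs n a L t).2 j = t.2 j + L.count j
  | [], t, j => by simp [applySubs]
  | i :: L, t, j => by
    rw [applySubs, q_coeff n a L, List.count_cons]
    simp only [subst]
    by_cases h : j = i <;> simp [h, beq_iff_eq] <;> omega

lemma v_coeff (n : ℕ) (a : Fin n → Fin n → ℕ) :
    ∀ (L : List (Fin n)) (t : (Fin n → ℕ) × (Fin n → ℕ)),
      validSeq n a L t → ∀ j : Fin n,
      (applySubs n a L t).1 j + L.count j
        = t.1 j + ∑ k, L.count k * a k j
  | [], t, _, j => by simp [applySubs]
  | i :: L, t, hv, j => by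
    obtain ⟨hpos, hv'⟩ := hv
    have IH := v_coeff n a L (subst n a i t) hv' j
    have hsub : (subst n a i t).1 j = t.1 j - (if j = i then 1 else 0) + a i j := rfl
    rw [hsub] at IH
    show (applySubs n a L (subst n a i t)).1 j + (i :: L).count j = _
    have hsum : ∑ k, (i :: L).count k * a k j
        = (∑ k, L.count k * a k j) + a i j := by
      have key : ∀ k : Fin n, (i :: L).count k * a k j
          = L.count k * a k j + (if k = i then a k j else 0) := by
        intro k
        rcases eq_or_ne k i with h | h
        · subst h; simp [List.count_cons, add_mul]
        · simp [List.count_cons, h, Ne.symm h]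
      rw [Finset.sum_congr rfl fun k _ => key k, Finset.sum_add_distrib,
        Finset.sum_ite_eq' Finset.univ i (fun k => a k j)]
      simp
    rw [hsum, List.count_cons]
    rcases eq_or_ne j i with h | h
    · subst h
      simp only [beq_self_eq_true, if_true, if_pos rfl] at IH ⊢
      omega
    · simp only [beq_iff_eq, if_neg h, if_neg (Ne.symm h)] at IH ⊢
      omega

theorem stmt_19 (n : ℕ) (hn : 0 < n) (a : Fin n → Fin n → ℕ)
    (s s' : (Fin n → ℕ) × (Fin n → ℕ))
    (hs : ∀ i, s.2 i = 0) (hs' : ∀ i, s'.2 i = 0)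
    (L L' : List (Fin n))
    (hL : validSeq n a L s) (hL' : validSeq n a L' s')
    (hγ : applySubs n a L s = applySubs n a L' s') :
    (∀ i, L.count i = L'.count i) ∧ (∀ i, s.1 i = s'.1 i) ∧ s = s' := by
  have hq : ∀ i, L.count i = L'.count i := by
    intro i
    have h1 := q_coeff n a L s i
    have h2 := q_coeff n a L' s' i
    rw [hγ] at h1
    rw [hs i] at h1; rw [hs' i] at h2
    omega
  have hv : ∀ i, s.1 i = s'.1 i := by
    intro i
    have h1 := v_coeff n a L s hL i
    have h2 := v_coeff n a L' s' hL' i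
    rw [hγ] at h1
    have hc : ∑ k, L.count k * a k i = ∑ k, L'.count k * a k i :=
      Finset.sum_congr rfl fun k _ => by rw [hq k]
    rw [hq i, hc] at h1
    omega
  refine ⟨hq, hv, ?_⟩
  ext i
  · exact hv i
  · rw [hs i, hs' i]
end
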